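/- arXiv:1204.6723 — 2 statements merged into one kernel-verified Lean document; each statement's English description precedes it below -/
import Mathlib

section
/- Let K be an opetopic directed complex and let h be a basis element of K of dimension m. Let B be the smallest set of basis elements of K containing h and closed under the operation of taking the terms of ∂⁻a and of ∂⁺a for each positive-dimensional a in B. Then the subgroups of the chain groups of K spanned by B are closed under ∂, and together with the restricted augmentation, the distinguished bases B ∩ K_q, and the thin elements of B, they form an opetopic directed complex which is atomic of dimension m with m-dimensional basis element h. -/
open Finsupp

/-- A free augmented directed complex, encoded by its distinguished graded basis:
`B` is the set of basis elements, `dim` the dimension function, `bd a` the boundary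
chain of a basis element `a`, and `eps` the augmentation (supported in dimension 0). -/
structure FADC where
  B : Type
  dim : B → ℕ
  bd : B → (B →₀ ℤ)
  eps : B → ℤ
  bd_dim : ∀ a b, b ∈ (bd a).support → dim b + 1 = dim a
  eps_dim : ∀ b, 0 < dim b → eps b = 0
  bd_bd : ∀ a : B, ((bd a).sum fun b n => n • bd b) = 0
  eps_bd : ∀ a : B, ((bd a).sum fun b n => n * eps b) = 0

namespace FADC

variable (K : FADC)

/-- The boundary homomorphism `∂`, extended to chains. -/
noncomputable def bdc (c : K.B →₀ ℤ) : K.B →₀ ℤ := c.sum fun b n => n • K.bd b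

/-- The augmentation `ε`, extended to chains. -/
noncomputable def epsc (c : K.B →₀ ℤ) : ℤ := c.sum fun b n => n * K.eps b

/-- `∂⁺c`, the positive part of `∂c`. -/
noncomputable def bdp (c : K.B →₀ ℤ) : K.B →₀ ℤ := (K.bdc c).mapRange (fun n => max n 0) (by simp)

/-- `∂⁻c`, the negative part of `∂c`. -/
noncomputable def bdm (c : K.B →₀ ℤ) : K.B →₀ ℤ := (-K.bdc c).mapRange (fun n => max n 0) (by simp)

/-- `K` is unital if `ε((∂⁻)^q a) = ε((∂⁺)^q a) = 1` for every `q`-dimensional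
basis element `a`. -/
def Unital : Prop := ∀ a : K.B,
  K.epsc (K.bdm^[K.dim a] (Finsupp.single a 1)) = 1 ∧
  K.epsc (K.bdp^[K.dim a] (Finsupp.single a 1)) = 1

/-- `K` is loop-free if its basis elements admit a (strict) partial order such that
for every basis element `a` and every `r > 0`, the basis elements occurring in
`(∂⁻)^r a` strictly precede those occurring in `(∂⁺)^r a`. -/
def LoopFree : Prop :=
  ∃ lt : K.B → K.B → Prop, IsStrictOrder K.B lt ∧
    ∀ (a : K.B) (r : ℕ), 0 < r →
      ∀ b ∈ (K.bdm^[r] (Finsupp.single a 1)).support,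
        ∀ b' ∈ (K.bdp^[r] (Finsupp.single a 1)).support, lt b b'

/-- `K` is atomic of dimension `n`. -/
def Atomic (n : ℕ) : Prop :=
  (∀ b : K.B, K.dim b ≤ n) ∧
  (∃! g : K.B, K.dim g = n) ∧
  (∀ b : K.B, K.dim b < n → ∃ a : K.B, K.dim b < K.dim a ∧
    (b ∈ (K.bdm (Finsupp.single a 1)).support ∨ b ∈ (K.bdp (Finsupp.single a 1)).support))

/-- `g_q^α(x)`: given `x_q^- = xq` and `x_{q+1}^α = c`, this is
`x_q^- + ∂⁺a_1 + … + ∂⁺a_k` where `a_1, …, a_k` are the terms of `c`. -/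
noncomputable def gch (xq c : K.B →₀ ℤ) : K.B →₀ ℤ :=
  xq + c.sum fun b n => n • K.bdp (Finsupp.single b 1)

/-- The negative chains `⟨K⟩_q^- = (∂⁻)^{n-q} g` of the canonical atom. -/
noncomputable def atomNeg (g : K.B) (n q : ℕ) : K.B →₀ ℤ :=
  if q ≤ n then K.bdm^[n - q] (Finsupp.single g 1) else 0

/-- The positive chains `⟨K⟩_q^+ = (∂⁺)^{n-q} g` of the canonical atom. -/
noncomputable def atomPos (g : K.B) (n q : ℕ) : K.B →₀ ℤ :=
  if q ≤ n then K.bdp^[n - q] (Finsupp.single g 1) else 0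

end FADC

/-- Membership in `νK`: the double sequence `(x_0^-, x_0^+ | x_1^-, x_1^+ | …)`,
given by `xm` and `xp`, is a member of `νK`. -/
structure NuMem (K : FADC) (xm xp : ℕ → (K.B →₀ ℤ)) : Prop where
  dim_m : ∀ q, ∀ b ∈ (xm q).support, K.dim b = q
  dim_p : ∀ q, ∀ b ∈ (xp q).support, K.dim b = q
  nonneg_m : ∀ q b, 0 ≤ xm q b
  nonneg_p : ∀ q b, 0 ≤ xp q b
  fin : ∃ n, ∀ q, n < q → xm q = 0 ∧ xp q = 0
  eps_m : K.epsc (xm 0) = 1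
  eps_p : K.epsc (xp 0) = 1
  bd_m : ∀ q, K.bdc (xm (q + 1)) = xp q - xm q
  bd_p : ∀ q, K.bdc (xp (q + 1)) = xp q - xm q

/-- `K` together with the class `thin` of thin basis elements is an
`n`-dimensional opetopic directed complex. -/
structure IsODC (K : FADC) (thin : K.B → Prop) (n : ℕ) : Prop where
  atomic : K.Atomic n
  loopFree : K.LoopFree
  unital : K.Unital
  thin_pos : ∀ b, thin b → 0 < K.dim b
  bdp_basis : ∀ b : K.B, 0 < K.dim b →
    ∃ a : K.B, ¬ thin a ∧ K.bdp (Finsupp.single b 1) = Finsupp.single a 1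
  bdm_thin : ∀ b : K.B, thin b →
    ∃ a : K.B, ¬ thin a ∧ K.bdm (Finsupp.single b 1) = Finsupp.single a 1

/-- An opetopic directed complex is reduced if every thin basis element is `∂⁻a`
for some other basis element `a`. -/
def ODCReduced (K : FADC) (thin : K.B → Prop) : Prop :=
  ∀ b, thin b → ∃ a, a ≠ b ∧ K.bdm (Finsupp.single a 1) = Finsupp.single b 1

/-- A network: finite sets of edges and vertices with partially defined source and
target functions; input edges are those with no source, output edges those with no
target. -/
structure Network where
  E : Type
  V : Type
  finE : Finite E
  finV : Finite V
  src : E → Option V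
  tgt : E → Option V

namespace Network

variable (N : Network)

/-- One step of a path: the target of `e` is the source of `e'`. -/
def step (e e' : N.E) : Prop := ∃ v : N.V, N.tgt e = some v ∧ N.src e' = some v

/-- There is a path from `e` to `e'`. -/
def PathTo (e e' : N.E) : Prop := Relation.ReflTransGen N.step e e'

/-- A network is acyclic if there is no nontrivial path from an edge to itself. -/
def Acyclic : Prop := ∀ e : N.E, ¬ Relation.TransGen N.step e e

/-- A network is linear if it is acyclic and consists of a single path
`e_0, v_1, e_1, …, v_k, e_k`. -/
def Linear : Prop := N.Acyclic ∧
  ∃ (k : ℕ) (e : Fin (k + 1) ≃ N.E) (v : Fin k ≃ N.V),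
    N.src (e 0) = none ∧ N.tgt (e (Fin.last k)) = none ∧
    ∀ i : Fin k, N.tgt (e i.castSucc) = some (v i) ∧ N.src (e i.succ) = some (v i)

/-- A network is confluent if it is acyclic, has a unique output edge, and every
vertex is the source of exactly one edge and the target of at least one edge. -/
def Confluent : Prop := N.Acyclic ∧ (∃! e : N.E, N.tgt e = none) ∧
  (∀ v : N.V, ∃! e : N.E, N.src e = some v) ∧ (∀ v : N.V, ∃ e : N.E, N.tgt e = some v)

end Network

/-- An opetopic network: an acyclic network with a unique output edge, together with
thin edges (which are inputs) and thin vertices (each the target of exactly one edge,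
which is not thin). -/
structure OpetopicNetwork extends Network where
  thinE : E → Prop
  thinV : V → Prop
  acyclic : toNetwork.Acyclic
  out_unique : ∃! e : E, tgt e = none
  thinE_input : ∀ e, thinE e → src e = none
  thinV_unique : ∀ v, thinV v → ∃! e, tgt e = some v
  thinV_nonthin : ∀ v e, thinV v → tgt e = some v → ¬ thinE e

/-- An opetopic network is reduced if every thin edge has a target vertex which is
the target of no other edge. -/
def OpetopicNetwork.Reduced (N : OpetopicNetwork) : Prop :=
  ∀ e, N.thinE e → ∃ v, N.tgt e = some v ∧ ∀ e', N.tgt e' = some v → e' = e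

/-- `c` is a constellation from `N` to `P`: a bijection from the vertices of `N` to
the input edges of `P`, preserving thinness, such that for every edge `e` of `P`
there is exactly one edge of `N` with a source but not a target in the preimage of
`I_e` (the input edges of `P` from which there is a path to `e`). -/
def IsConstellation (N P : OpetopicNetwork) (c : N.V → P.E) : Prop :=
  (∀ v, P.src (c v) = none) ∧
  Function.Injective c ∧
  (∀ e : P.E, P.src e = none → ∃ v, c v = e) ∧
  (∀ v, N.thinV v ↔ P.thinE (c v)) ∧
  (∀ e : P.E, ∃! e' : N.E,
    (∃ v, N.src e' = some v ∧ P.toNetwork.PathTo (c v) e) ∧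
    ¬ (∃ v, N.tgt e' = some v ∧ P.toNetwork.PathTo (c v) e))

/-- An `n`-dimensional opetopic sequence `N_0 → N_1 → … → N_n`. -/
structure OpetopicSequence (n : ℕ) where
  N : Fin (n + 1) → OpetopicNetwork
  c : ∀ q : Fin n, (N q.castSucc).V → (N q.succ).E
  constell : ∀ q : Fin n, IsConstellation (N q.castSucc) (N q.succ) (c q)
  linear0 : (N 0).toNetwork.Linear
  noThin0 : ∀ e, ¬ (N 0).thinE e
  top_single : ∃! _e : (N (Fin.last n)).E, True
  top_noV : IsEmpty (N (Fin.last n)).V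

/-- An isomorphism of opetopic sequences: families of bijections on edges and
vertices preserving sources, targets, thin edges and thin vertices, and commuting
with the constellations. -/
def SeqIso (n : ℕ) (S S' : OpetopicSequence n) : Prop :=
  ∃ (fE : ∀ q : Fin (n + 1), (S.N q).E ≃ (S'.N q).E)
    (fV : ∀ q : Fin (n + 1), (S.N q).V ≃ (S'.N q).V),
    (∀ q : Fin (n + 1),
      (∀ e v, (S.N q).src e = some v ↔ (S'.N q).src (fE q e) = some (fV q v)) ∧
      (∀ e v, (S.N q).tgt e = some v ↔ (S'.N q).tgt (fE q e) = some (fV q v)) ∧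
      (∀ e, (S.N q).thinE e ↔ (S'.N q).thinE (fE q e)) ∧
      (∀ v, (S.N q).thinV v ↔ (S'.N q).thinV (fV q v))) ∧
    (∀ q : Fin n, ∀ v, fE q.succ (S.c q v) = S'.c q (fV q.castSucc v))

/-- The opetopic sequence `S` realizes the sequence
`G_0^-(⟨K⟩) → … → G_n^-(⟨K⟩)` associated to the opetopic directed complex `K`
(with top basis element `g` and thin elements `thin`): the edges of `S.N q`
correspond bijectively to the terms of `g_q^-(⟨K⟩)`, the vertices to the terms of
`⟨K⟩_{q+1}^-`, sources, targets and thinness are as prescribed by `∂⁺`, `∂⁻` and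
`thin`, and the constellations are the identity correspondences. -/
def RealizedBy (K : FADC) (thin : K.B → Prop) (n : ℕ) (g : K.B)
    (S : OpetopicSequence n) : Prop :=
  ∃ (eE : ∀ q : Fin (n + 1), (S.N q).E → K.B)
    (eV : ∀ q : Fin (n + 1), (S.N q).V → K.B),
    (∀ q : Fin (n + 1),
      Function.Injective (eE q) ∧
      (∀ ed, eE q ed ∈ (K.gch (K.atomNeg g n q.1) (K.atomNeg g n (q.1 + 1))).support) ∧
      (∀ b ∈ (K.gch (K.atomNeg g n q.1) (K.atomNeg g n (q.1 + 1))).support,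
        ∃ ed, eE q ed = b) ∧
      Function.Injective (eV q) ∧
      (∀ v, eV q v ∈ (K.atomNeg g n (q.1 + 1)).support) ∧
      (∀ b ∈ (K.atomNeg g n (q.1 + 1)).support, ∃ v, eV q v = b) ∧
      (∀ ed v, (S.N q).src ed = some v ↔
        eE q ed ∈ (K.bdp (Finsupp.single (eV q v) 1)).support) ∧
      (∀ ed v, (S.N q).tgt ed = some v ↔
        eE q ed ∈ (K.bdm (Finsupp.single (eV q v) 1)).support) ∧
      (∀ ed, (S.N q).thinE ed ↔ thin (eE q ed)) ∧
      (∀ v, (S.N q).thinV v ↔ thin (eV q v))) ∧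
    (∀ q : Fin n, ∀ v, eE q.succ (S.c q v) = eV q.castSucc v)

/-- A bundled `n`-dimensional opetopic directed complex. -/
structure ODCBundle (n : ℕ) where
  K : FADC
  thin : K.B → Prop
  g : K.B
  dim_g : K.dim g = n
  isODC : IsODC K thin n

/-- Isomorphism of (bundled) opetopic directed complexes: a dimension- and
thinness-preserving bijection of bases commuting with boundaries and augmentations. -/
def ODCIso {n : ℕ} (A A' : ODCBundle n) : Prop :=
  ∃ φ : A.K.B ≃ A'.K.B,
    (∀ b, A'.K.dim (φ b) = A.K.dim b) ∧
    (∀ b, A'.thin (φ b) ↔ A.thin b) ∧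
    (∀ b, A'.K.bd (φ b) = Finsupp.equivMapDomain φ (A.K.bd b)) ∧
    (∀ b, A'.K.eps (φ b) = A.K.eps b)

namespace Stmt18Aux

open FADC Finsupp

theorem bdc_single (K : FADC) (a : K.B) : K.bdc (Finsupp.single a 1) = K.bd a := by
  unfold FADC.bdc
  rw [Finsupp.sum_single_index] <;> simp

theorem mem_bdm_single (K : FADC) (a b : K.B) :
    b ∈ (K.bdm (Finsupp.single a 1)).support ↔ K.bd a b < 0 := by
  rw [Finsupp.mem_support_iff]
  show ((-K.bdc (Finsupp.single a 1)).mapRange (fun n => max n 0) (by simp)) b ≠ 0 ↔ _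
  rw [Finsupp.mapRange_apply, Finsupp.neg_apply, bdc_single]
  omega

theorem mem_bdp_single (K : FADC) (a b : K.B) :
    b ∈ (K.bdp (Finsupp.single a 1)).support ↔ 0 < K.bd a b := by
  rw [Finsupp.mem_support_iff]
  show ((K.bdc (Finsupp.single a 1)).mapRange (fun n => max n 0) (by simp)) b ≠ 0 ↔ _
  rw [Finsupp.mapRange_apply, bdc_single]
  omega

theorem mem_bd_support_iff (K : FADC) (a b : K.B) :
    b ∈ (K.bd a).support ↔
      b ∈ (K.bdm (Finsupp.single a 1)).support ∨ b ∈ (K.bdp (Finsupp.single a 1)).support := by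
  rw [mem_bdm_single, mem_bdp_single, Finsupp.mem_support_iff]
  omega

theorem subtypeDomain_smul' {α : Type} (p : α → Prop) (n : ℤ) (c : α →₀ ℤ) :
    (n • c).subtypeDomain p = n • c.subtypeDomain p :=
  Finsupp.ext fun _ => rfl

/-- The subcomplex spanned by a closed set `B` of basis elements. -/
@[reducible] noncomputable def L (K : FADC) (B : Set K.B)
    (hcl : ∀ a ∈ B, ∀ b ∈ (K.bd a).support, b ∈ B) : FADC where
  B := {b : K.B // b ∈ B}
  dim b := K.dim b.1
  bd a := (K.bd a.1).subtypeDomain (· ∈ B)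
  eps b := K.eps b.1
  bd_dim a b hb := K.bd_dim a.1 b.1 (by
    rw [Finsupp.mem_support_iff] at hb ⊢
    simpa [Finsupp.subtypeDomain_apply] using hb)
  eps_dim b hb := K.eps_dim b.1 hb
  bd_bd a := by
    have h1 : ∀ x ∈ (K.bd a.1).support, x ∈ B := hcl a.1 a.2
    calc ((K.bd a.1).subtypeDomain (· ∈ B)).sum
          (fun b n => n • (K.bd b.1).subtypeDomain (· ∈ B))
        = (K.bd a.1).sum (fun x n => n • (K.bd x).subtypeDomain (· ∈ B)) :=
          Finsupp.sum_subtypeDomain_index (p := (· ∈ B))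
            (h := fun x n => n • (K.bd x).subtypeDomain (· ∈ B)) h1
      _ = ((K.bd a.1).sum fun x n => n • K.bd x).subtypeDomain (· ∈ B) := by
          rw [Finsupp.subtypeDomain_finsupp_sum]
          exact (Finsupp.sum_congr fun x _ => (subtypeDomain_smul' _ _ _)).symm
      _ = 0 := by rw [K.bd_bd]; exact Finsupp.subtypeDomain_zero
  eps_bd a := by
    have h1 : ∀ x ∈ (K.bd a.1).support, x ∈ B := hcl a.1 a.2
    calc ((K.bd a.1).subtypeDomain (· ∈ B)).sum (fun b n => n * K.eps b.1)
        = (K.bd a.1).sum (fun x n => n * K.eps x) :=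
          Finsupp.sum_subtypeDomain_index (p := (· ∈ B)) (h := fun x n => n * K.eps x) h1
      _ = 0 := K.eps_bd a.1

variable {K : FADC} {B : Set K.B}

/-- The inclusion embedding. -/
noncomputable def eB (K : FADC) (B : Set K.B) : {b : K.B // b ∈ B} ↪ K.B :=
  Function.Embedding.subtype _

theorem embDomain_neg {α β : Type} (f : α ↪ β) (c : α →₀ ℤ) :
    Finsupp.embDomain f (-c) = -(Finsupp.embDomain f c) := by
  rw [Finsupp.embDomain_eq_mapDomain, Finsupp.embDomain_eq_mapDomain]
  exact map_neg (Finsupp.mapDomain.addMonoidHom (f : α → β)) c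

theorem emb_subtypeDomain (c : K.B →₀ ℤ) (hc : ∀ x ∈ c.support, x ∈ B) :
    Finsupp.embDomain (eB K B) (c.subtypeDomain (· ∈ B)) = c := by
  ext x
  by_cases hx : x ∈ B
  · exact (Finsupp.embDomain_apply_self (eB K B) _ ⟨x, hx⟩).trans Finsupp.subtypeDomain_apply
  · rw [Finsupp.embDomain_notin_range]
    · exact ((Finsupp.notMem_support_iff).1 fun hs => hx (hc x hs)).symm
    · rintro ⟨⟨y, hy⟩, rfl⟩
      exact hx hy

theorem mem_support_emb (c : {b : K.B // b ∈ B} →₀ ℤ) (b : {b : K.B // b ∈ B}) :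
    b ∈ c.support ↔ b.1 ∈ (Finsupp.embDomain (eB K B) c).support := by
  rw [Finsupp.support_embDomain, Finset.mem_map]
  constructor
  · exact fun hb => ⟨b, hb, rfl⟩
  · rintro ⟨a, ha, hab⟩
    have : a = b := Subtype.ext hab
    rwa [← this]

variable (hcl : ∀ a ∈ B, ∀ b ∈ (K.bd a).support, b ∈ B)

theorem bd_emb (b : {b : K.B // b ∈ B}) :
    Finsupp.embDomain (eB K B) ((L K B hcl).bd b) = K.bd b.1 :=
  emb_subtypeDomain _ (hcl b.1 b.2)

theorem bdc_emb (c : {b : K.B // b ∈ B} →₀ ℤ) :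
    K.bdc (Finsupp.embDomain (eB K B) c) = Finsupp.embDomain (eB K B) ((L K B hcl).bdc c) := by
  show (Finsupp.embDomain (eB K B) c).sum (fun b n => n • K.bd b)
      = Finsupp.embDomain (eB K B) (c.sum fun b n => n • (L K B hcl).bd b)
  rw [Finsupp.sum_embDomain, Finsupp.embDomain_eq_mapDomain, Finsupp.mapDomain_sum]
  refine Finsupp.sum_congr fun a _ => ?_
  rw [Finsupp.mapDomain_smul, ← Finsupp.embDomain_eq_mapDomain (eB K B), bd_emb hcl]
  rfl

theorem bdp_emb (c : {b : K.B // b ∈ B} →₀ ℤ) :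
    K.bdp (Finsupp.embDomain (eB K B) c) = Finsupp.embDomain (eB K B) ((L K B hcl).bdp c) := by
  show (K.bdc (Finsupp.embDomain (eB K B) c)).mapRange (fun n => max n 0) (by simp)
      = Finsupp.embDomain (eB K B)
        (((L K B hcl).bdc c).mapRange (fun n => max n 0) (by simp))
  rw [bdc_emb hcl, ← Finsupp.embDomain_mapRange]

theorem bdm_emb (c : {b : K.B // b ∈ B} →₀ ℤ) :
    K.bdm (Finsupp.embDomain (eB K B) c) = Finsupp.embDomain (eB K B) ((L K B hcl).bdm c) := by
  show (-(K.bdc (Finsupp.embDomain (eB K B) c))).mapRange (fun n => max n 0) (by simp)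
      = Finsupp.embDomain (eB K B)
        ((-((L K B hcl).bdc c)).mapRange (fun n => max n 0) (by simp))
  rw [bdc_emb hcl, Finsupp.embDomain_mapRange]
  congr 1
  rw [embDomain_neg]

theorem bdp_iter_emb (r : ℕ) (c : {b : K.B // b ∈ B} →₀ ℤ) :
    K.bdp^[r] (Finsupp.embDomain (eB K B) c)
      = Finsupp.embDomain (eB K B) ((L K B hcl).bdp^[r] c) := by
  induction r generalizing c with
  | zero => rfl
  | succ r ih =>
      rw [Function.iterate_succ_apply, Function.iterate_succ_apply, bdp_emb hcl, ih]

theorem bdm_iter_emb (r : ℕ) (c : {b : K.B // b ∈ B} →₀ ℤ) :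
    K.bdm^[r] (Finsupp.embDomain (eB K B) c)
      = Finsupp.embDomain (eB K B) ((L K B hcl).bdm^[r] c) := by
  induction r generalizing c with
  | zero => rfl
  | succ r ih =>
      rw [Function.iterate_succ_apply, Function.iterate_succ_apply, bdm_emb hcl, ih]

theorem epsc_emb (c : {b : K.B // b ∈ B} →₀ ℤ) :
    K.epsc (Finsupp.embDomain (eB K B) c) = (L K B hcl).epsc c := by
  show (Finsupp.embDomain (eB K B) c).sum (fun b n => n * K.eps b)
      = c.sum fun b n => n * (L K B hcl).eps b
  rw [Finsupp.sum_embDomain]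
  rfl

theorem single_emb (b : {b : K.B // b ∈ B}) :
    Finsupp.embDomain (eB K B) (Finsupp.single b (1 : ℤ)) = Finsupp.single b.1 1 :=
  Finsupp.embDomain_single _ _ _

theorem bdm_single_emb (b : {b : K.B // b ∈ B}) :
    K.bdm (Finsupp.single b.1 1) = Finsupp.embDomain (eB K B) ((L K B hcl).bdm (Finsupp.single b 1)) := by
  rw [← single_emb, bdm_emb hcl]

theorem bdp_single_emb (b : {b : K.B // b ∈ B}) :
    K.bdp (Finsupp.single b.1 1) = Finsupp.embDomain (eB K B) ((L K B hcl).bdp (Finsupp.single b 1)) := by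
  rw [← single_emb, bdp_emb hcl]

end Stmt18Aux

/-- Section 6: the atomic subcomplex generated by a basis element `h` of dimension
`m` in an opetopic directed complex `K` (spanned by the smallest set `B` of basis
elements containing `h` and closed under taking terms of `∂⁻` and `∂⁺`) is closed
under `∂` and is itself an opetopic directed complex, atomic of dimension `m` with
top basis element `h`. -/
theorem stmt18 (K : FADC) (thin : K.B → Prop) (n : ℕ) (hK : IsODC K thin n)
    (h : K.B) (m : ℕ) (hm : K.dim h = m) (B : Set K.B)
    (hB1 : h ∈ B)
    (hB2 : ∀ a ∈ B, 0 < K.dim a → ∀ b : K.B,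
      (b ∈ (K.bdm (Finsupp.single a 1)).support ∨
        b ∈ (K.bdp (Finsupp.single a 1)).support) → b ∈ B)
    (hB3 : ∀ C : Set K.B, h ∈ C →
      (∀ a ∈ C, 0 < K.dim a → ∀ b : K.B,
        (b ∈ (K.bdm (Finsupp.single a 1)).support ∨
          b ∈ (K.bdp (Finsupp.single a 1)).support) → b ∈ C) →
      B ⊆ C) :
    (∀ a ∈ B, ∀ b ∈ (K.bd a).support, b ∈ B) ∧
    ∃ (L : FADC) (thinL : L.B → Prop) (φ : L.B → K.B),
      Function.Injective φ ∧ Set.range φ = B ∧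
      (∀ b : L.B, K.dim (φ b) = L.dim b) ∧
      (∀ b : L.B, K.bd (φ b) = Finsupp.mapDomain φ (L.bd b)) ∧
      (∀ b : L.B, K.eps (φ b) = L.eps b) ∧
      (∀ b : L.B, thinL b ↔ thin (φ b)) ∧
      IsODC L thinL m ∧
      ∃ h0 : L.B, φ h0 = h ∧ L.dim h0 = m := by
  classical
  have hcl : ∀ a ∈ B, ∀ b ∈ (K.bd a).support, b ∈ B := by
    intro a ha b hb
    have hd : K.dim b + 1 = K.dim a := K.bd_dim a b hb
    exact hB2 a ha (by omega) b ((Stmt18Aux.mem_bd_support_iff K a b).1 hb)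
  have fact1 : ∀ b ∈ B, b = h ∨ K.dim b < m := by
    intro b hb
    refine hB3 {b | b = h ∨ K.dim b < m} (Or.inl rfl) ?_ hb
    intro a ha hpos b' hb'
    have hd : K.dim b' + 1 = K.dim a := K.bd_dim a b' ((Stmt18Aux.mem_bd_support_iff K a b').2 hb')
    rcases ha with rfl | hlt
    · right; omega
    · right; omega
  have fact3 : ∀ b ∈ B, b = h ∨ ∃ a, a ∈ B ∧ K.dim b < K.dim a ∧
      (b ∈ (K.bdm (Finsupp.single a 1)).support ∨ b ∈ (K.bdp (Finsupp.single a 1)).support) := by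
    intro b hb
    have key := hB3 (B ∩ {b | b = h ∨ ∃ a, a ∈ B ∧ K.dim b < K.dim a ∧
        (b ∈ (K.bdm (Finsupp.single a 1)).support ∨ b ∈ (K.bdp (Finsupp.single a 1)).support)})
      ⟨hB1, Or.inl rfl⟩ ?_ hb
    · exact key.2
    · rintro a ⟨haB, -⟩ hpos b' hb'
      have hd : K.dim b' + 1 = K.dim a :=
        K.bd_dim a b' ((Stmt18Aux.mem_bd_support_iff K a b').2 hb')
      exact ⟨hB2 a haB hpos b' hb', Or.inr ⟨a, haB, by omega, hb'⟩⟩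
  refine ⟨hcl, Stmt18Aux.L K B hcl, (fun b => thin b.1), Subtype.val, Subtype.val_injective,
    Subtype.range_val, fun b => rfl, ?_, fun b => rfl, fun b => Iff.rfl, ?_, ⟨h, hB1⟩, rfl, hm⟩
  · intro b
    have hb := Stmt18Aux.bd_emb hcl b
    rw [Finsupp.embDomain_eq_mapDomain] at hb
    exact hb.symm
  refine ⟨⟨?_, ⟨⟨h, hB1⟩, hm, ?_⟩, ?_⟩, ?_, ?_, ?_, ?_, ?_⟩
  · -- dimension bound
    intro b
    show K.dim b.1 ≤ m
    rcases fact1 b.1 b.2 with he | hlt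
    · rw [he, hm]
    · omega
  · -- uniqueness of top element
    intro y hy
    rcases fact1 y.1 y.2 with he | hlt
    · exact Subtype.ext he
    · exact absurd hy (by show ¬ K.dim y.1 = m; omega)
  · -- atomicity
    intro b hb
    rcases fact3 b.1 b.2 with he | ⟨a, haB, hda, hmem⟩
    · exfalso
      have : K.dim b.1 = m := by rw [he, hm]
      have hb' : K.dim b.1 < m := hb
      omega
    · refine ⟨⟨a, haB⟩, hda, ?_⟩
      rcases hmem with hmem | hmem
      · left
        rw [Stmt18Aux.mem_support_emb, ← Stmt18Aux.bdm_single_emb hcl]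
        exact hmem
      · right
        rw [Stmt18Aux.mem_support_emb, ← Stmt18Aux.bdp_single_emb hcl]
        exact hmem
  · -- loop-freeness
    obtain ⟨lt, hord, hlt⟩ := hK.loopFree
    refine ⟨fun x y => lt x.1 y.1, ?_, ?_⟩
    · exact { irrefl := fun a ha => hord.toIrrefl.irrefl a.1 ha,
              trans := fun a b c hab hbc => hord.toIsTrans.trans a.1 b.1 c.1 hab hbc }
    · intro a r hr b hb b' hb'
      apply hlt a.1 r hr b.1 ?_ b'.1 ?_
      · rw [← Stmt18Aux.single_emb, Stmt18Aux.bdm_iter_emb hcl, ← Stmt18Aux.mem_support_emb]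
        exact hb
      · rw [← Stmt18Aux.single_emb, Stmt18Aux.bdp_iter_emb hcl, ← Stmt18Aux.mem_support_emb]
        exact hb'
  · -- unitality
    intro a
    have h1 := (hK.unital a.1).1
    have h2 := (hK.unital a.1).2
    rw [← Stmt18Aux.single_emb, Stmt18Aux.bdm_iter_emb hcl, Stmt18Aux.epsc_emb hcl] at h1
    rw [← Stmt18Aux.single_emb, Stmt18Aux.bdp_iter_emb hcl, Stmt18Aux.epsc_emb hcl] at h2
    exact ⟨h1, h2⟩
  · -- thin elements are positive-dimensional
    intro b hb
    exact hK.thin_pos b.1 hb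
  · -- positive boundary is a single non-thin basis element
    intro b hb0
    obtain ⟨a, hna, ha⟩ := hK.bdp_basis b.1 hb0
    have haB : a ∈ B := by
      refine hB2 b.1 b.2 hb0 a (Or.inr ?_)
      rw [ha]
      simp [Finsupp.mem_support_iff]
    refine ⟨⟨a, haB⟩, hna, ?_⟩
    apply Finsupp.embDomain_injective (Stmt18Aux.eB K B)
    rw [← Stmt18Aux.bdp_single_emb hcl, Stmt18Aux.single_emb]
    exact ha
  · -- negative boundary of thin elements
    intro b hb
    have hb0 : 0 < K.dim b.1 := hK.thin_pos b.1 hb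
    obtain ⟨a, hna, ha⟩ := hK.bdm_thin b.1 hb
    have haB : a ∈ B := by
      refine hB2 b.1 b.2 hb0 a (Or.inl ?_)
      rw [ha]
      simp [Finsupp.mem_support_iff]
    refine ⟨⟨a, haB⟩, hna, ?_⟩
    apply Finsupp.embDomain_injective (Stmt18Aux.eB K B)
    rw [← Stmt18Aux.bdm_single_emb hcl, Stmt18Aux.single_emb]
    exact ha
end

section
/- Let L be an opetopic directed complex which is atomic of dimension m with m-dimensional basis element h. Then for every integer q with 0 ≤ q < m, the q-dimensional basis elements of L are precisely the basis elements occurring in the support of (∂⁻)^{m−q}h together with the basis elements ∂⁺a for a ranging over the terms of (∂⁻)^{m−q−1}h; equivalently, the q-dimensional basis elements of L are exactly the terms of g_q^−(⟨L⟩). -/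
open Finsupp

namespace FADC

variable (K : FADC)

theorem bdc_apply' (c : K.B →₀ ℤ) (b : K.B) :
    K.bdc c b = c.sum fun a n => n * K.bd a b := by
  rw [bdc, Finsupp.sum_apply]
  exact Finsupp.sum_congr fun a _ => by simp

theorem bdp_apply' (c : K.B →₀ ℤ) (b : K.B) : K.bdp c b = max (K.bdc c b) 0 := by
  rw [bdp, Finsupp.mapRange_apply]

theorem bdm_apply' (c : K.B →₀ ℤ) (b : K.B) : K.bdm c b = max (-(K.bdc c b)) 0 := by
  rw [bdm, Finsupp.mapRange_apply, Finsupp.neg_apply]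

theorem bdp_nonneg' (c : K.B →₀ ℤ) (b : K.B) : 0 ≤ K.bdp c b := by
  rw [bdp_apply']; exact le_max_right _ _

theorem bdm_nonneg' (c : K.B →₀ ℤ) (b : K.B) : 0 ≤ K.bdm c b := by
  rw [bdm_apply']; exact le_max_right _ _

theorem mem_bdp_support' (c : K.B →₀ ℤ) (b : K.B) :
    b ∈ (K.bdp c).support ↔ 0 < K.bdc c b := by
  rw [Finsupp.mem_support_iff, bdp_apply']; omega

theorem mem_bdm_support' (c : K.B →₀ ℤ) (b : K.B) :
    b ∈ (K.bdm c).support ↔ K.bdc c b < 0 := by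
  rw [Finsupp.mem_support_iff, bdm_apply']; omega

theorem bdp_sub_bdm' (c : K.B →₀ ℤ) : K.bdp c - K.bdm c = K.bdc c := by
  ext b
  rw [Finsupp.sub_apply, bdp_apply', bdm_apply']
  omega

/-- the boundary as a linear map -/
noncomputable def bdL : (K.B →₀ ℤ) →ₗ[ℤ] (K.B →₀ ℤ) :=
  Finsupp.lsum ℤ fun a => LinearMap.smulRight LinearMap.id (K.bd a)

theorem bdc_eq_bdL (c : K.B →₀ ℤ) : K.bdc c = K.bdL c := rfl

theorem bdc_single' (a : K.B) : K.bdc (Finsupp.single a 1) = K.bd a := by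
  rw [bdc, Finsupp.sum_single_index] <;> simp

theorem bdc_bdc' (c : K.B →₀ ℤ) : K.bdc (K.bdc c) = 0 := by
  rw [bdc_eq_bdL, bdc_eq_bdL]
  have : K.bdL ∘ₗ K.bdL = 0 := by
    apply Finsupp.lhom_ext'
    intro a
    apply LinearMap.ext_ring
    simp only [LinearMap.comp_apply, Finsupp.lsingle_apply, LinearMap.zero_apply]
    show K.bdL (K.bdL (Finsupp.single a 1)) = 0
    rw [← bdc_eq_bdL, ← bdc_eq_bdL, bdc_single', bdc]
    exact K.bd_bd a
  rw [← LinearMap.comp_apply, this, LinearMap.zero_apply]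

/-- ∂(∂⁺c) = ∂(∂⁻c) -/
theorem bdc_bdp_eq_bdc_bdm (c : K.B →₀ ℤ) : K.bdc (K.bdp c) = K.bdc (K.bdm c) := by
  have h : K.bdL (K.bdp c - K.bdm c) = 0 := by
    rw [bdp_sub_bdm', ← bdc_eq_bdL]; exact K.bdc_bdc' c
  rw [map_sub, sub_eq_zero] at h
  rw [bdc_eq_bdL, bdc_eq_bdL]; exact h

theorem exists_term_bd_ne (c : K.B →₀ ℤ) (b : K.B) (h : K.bdc c b ≠ 0) :
    ∃ a ∈ c.support, K.bd a b ≠ 0 := by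
  by_contra hcon
  push_neg at hcon
  apply h
  rw [bdc_apply', Finsupp.sum]
  exact Finset.sum_eq_zero fun a ha => by rw [hcon a ha, mul_zero]

theorem cancel (c : K.B →₀ ℤ) (hc : ∀ b, 0 ≤ c b) (a b : K.B) (ha : a ∈ c.support)
    (hab : K.bd a b < 0) :
    K.bdc c b < 0 ∨ ∃ a' ∈ c.support, 0 < K.bd a' b := by
  classical
  by_contra hcon
  push_neg at hcon
  obtain ⟨h1, h2⟩ := hcon
  have key : K.bdc c b < 0 := by
    rw [bdc_apply', Finsupp.sum, ← Finset.add_sum_erase _ _ ha]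
    have hterm : c a * K.bd a b < 0 := by
      have : 0 < c a := lt_of_le_of_ne (hc a) (Ne.symm (Finsupp.mem_support_iff.mp ha))
      exact mul_neg_of_pos_of_neg this hab
    have hrest : (∑ x ∈ c.support.erase a, c x * K.bd x b) ≤ 0 :=
      Finset.sum_nonpos fun x hx =>
        mul_nonpos_of_nonneg_of_nonpos (hc x) (h2 x (Finset.mem_of_mem_erase hx))
    omega
  omega

theorem iter_bdm_nonneg (h : K.B) (r : ℕ) (b : K.B) :
    0 ≤ (K.bdm^[r] (Finsupp.single h 1)) b := by
  classical
  cases r with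
  | zero =>
    simp only [Function.iterate_zero, id_eq]
    rw [Finsupp.single_apply]
    split <;> omega
  | succ r => rw [Function.iterate_succ_apply']; exact K.bdm_nonneg' _ b

theorem iter_bdm_dim (h : K.B) (r : ℕ) :
    ∀ b ∈ (K.bdm^[r] (Finsupp.single h 1)).support, K.dim b + r = K.dim h := by
  induction r with
  | zero =>
    intro b hb
    simp only [Function.iterate_zero, id_eq] at hb
    rw [Finsupp.support_single_ne_zero h one_ne_zero, Finset.mem_singleton] at hb
    subst hb; omega
  | succ r ih =>
    intro b hb
    rw [Function.iterate_succ_apply', mem_bdm_support'] at hb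
    obtain ⟨a, ha, hab⟩ := K.exists_term_bd_ne (K.bdm^[r] (Finsupp.single h 1)) b (by omega)
    have hd := K.bd_dim a b (Finsupp.mem_support_iff.mpr hab)
    have := ih a ha
    omega

end FADC

/-- Section 6: in an opetopic directed complex `L` which is atomic of dimension `m`
with top basis element `h`, for `0 ≤ q < m` the `q`-dimensional basis elements are
precisely the terms of `(∂⁻)^{m-q} h` together with the basis elements `∂⁺a` for
`a` a term of `(∂⁻)^{m-q-1} h`; equivalently, they are exactly the terms of
`g_q^-(⟨L⟩)`. -/
theorem stmt19 (L : FADC) (thinL : L.B → Prop) (m : ℕ) (hL : IsODC L thinL m)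
    (h : L.B) (hh : L.dim h = m) (q : ℕ) (hq : q < m) :
    ∀ b : L.B,
      ((L.dim b = q) ↔
        (b ∈ (L.bdm^[m - q] (Finsupp.single h 1)).support ∨
          ∃ a ∈ (L.bdm^[m - q - 1] (Finsupp.single h 1)).support,
            Finsupp.single b 1 = L.bdp (Finsupp.single a 1))) ∧
      ((L.dim b = q) ↔
        b ∈ (L.gch (L.bdm^[m - q] (Finsupp.single h 1))
          (L.bdm^[m - q - 1] (Finsupp.single h 1))).support) := by
  classical
  set X : ℕ → (L.B →₀ ℤ) := fun r => L.bdm^[r] (Finsupp.single h 1) with hXdef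
  have nonnegX : ∀ r b', 0 ≤ X r b' := fun r b' => L.iter_bdm_nonneg h r b'
  have dimX : ∀ r, ∀ a ∈ (X r).support, L.dim a + r = m := by
    intro r a ha
    have := L.iter_bdm_dim h r a ha
    omega
  have Xsucc : ∀ r, X (r + 1) = L.bdm (X r) := fun r => Function.iterate_succ_apply' _ r _
  have X0 : X 0 = Finsupp.single h 1 := rfl
  have bdpS : ∀ a : L.B, 0 < L.dim a → ∀ b' : L.B,
      (b' ∈ (L.bdp (Finsupp.single a 1)).support ↔
        Finsupp.single b' 1 = L.bdp (Finsupp.single a 1)) := by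
    intro a ha b'
    obtain ⟨a₀, -, e⟩ := hL.bdp_basis a ha
    rw [e, Finsupp.support_single_ne_zero a₀ one_ne_zero, Finset.mem_singleton]
    constructor
    · rintro rfl; rfl
    · intro hs
      exact Finsupp.single_left_injective one_ne_zero hs
  obtain ⟨lt, ltso, ltlf⟩ := hL.loopFree
  have lttrans : ∀ {x y z : L.B}, lt x y → lt y z → lt x z := fun hx hy =>
    ltso.toIsTrans.trans _ _ _ hx hy
  have ltirrefl : ∀ x : L.B, ¬ lt x x := fun x => by haveI := ltso; exact irrefl x
  have main : ∀ k, 1 ≤ k → k ≤ m → ∀ b' : L.B, L.dim b' = m - k →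
      b' ∈ (X k).support ∨ ∃ a ∈ (X (k - 1)).support,
        Finsupp.single b' 1 = L.bdp (Finsupp.single a 1) := by
    intro k
    induction k using Nat.strong_induction_on with
    | _ k IH =>
    intro hk1 hkm
    -- the finite set of possible intermediate elements of dimension m - (k-1)
    set S : Finset L.B := (X (k - 1)).support ∪ (X (k - 2)).support.biUnion
        (fun a' => (L.bdp (Finsupp.single a' 1)).support) with hSdef
    -- the descent step
    have step : ∀ n : ℕ, ∀ a : L.B, (S.filter (fun s => lt s a)).card ≤ n →
        (a ∈ (X (k - 1)).support ∨ (2 ≤ k ∧ ∃ a' ∈ (X (k - 2)).support,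
          Finsupp.single a 1 = L.bdp (Finsupp.single a' 1))) →
        ∀ b'' : L.B, L.bd a b'' ≠ 0 →
        b'' ∈ (X k).support ∨ ∃ a₁ ∈ (X (k - 1)).support,
          Finsupp.single b'' 1 = L.bdp (Finsupp.single a₁ 1) := by
      intro n
      induction n using Nat.strong_induction_on with
      | _ n IHn =>
      intro a hcard good b'' hne
      rcases good with haX | ⟨hk2, a', ha', haeq⟩
      · -- case A : a is a term of X (k-1)
        have hdima : 0 < L.dim a := by
          have := dimX (k - 1) a haX
          omega
        rcases hne.lt_or_gt with hneg | hpos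
        · rcases L.cancel (X (k - 1)) (nonnegX (k - 1)) a b'' haX hneg with hc | ⟨a₂, ha₂, hp₂⟩
          · left
            have hXk : X k = L.bdm (X (k - 1)) := by
              rw [← Xsucc]
              congr 1
              omega
            rw [hXk, L.mem_bdm_support']
            exact hc
          · right
            refine ⟨a₂, ha₂, ?_⟩
            have hdima₂ : 0 < L.dim a₂ := by
              have := dimX (k - 1) a₂ ha₂
              omega
            exact (bdpS a₂ hdima₂ b'').mp (by rw [L.mem_bdp_support', L.bdc_single']; exact hp₂)
        · right
          refine ⟨a, haX, ?_⟩
          exact (bdpS a hdima b'').mp (by rw [L.mem_bdp_support', L.bdc_single']; exact hpos)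
      · -- case B : single a 1 = ∂⁺ a' with a' a term of X (k-2)
        have hbda : L.bd a = L.bdc (L.bdm (Finsupp.single a' 1)) := by
          rw [← L.bdc_single', haeq, L.bdc_bdp_eq_bdc_bdm]
        obtain ⟨d, hd, hdb⟩ := L.exists_term_bd_ne (L.bdm (Finsupp.single a' 1)) b''
          (by rw [← hbda]; exact hne)
        -- dimension bookkeeping
        have hdim_a' : L.dim a' + (k - 2) = m := dimX (k - 2) a' ha'
        have hd' : L.bdc (Finsupp.single a' 1) d < 0 := (L.mem_bdm_support' _ d).mp hd
        have hdd : L.dim d + 1 = L.dim a' := by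
          apply L.bd_dim a' d
          rw [Finsupp.mem_support_iff]
          rw [L.bdc_single'] at hd'
          omega
        have hdimd : L.dim d = m - (k - 1) := by omega
        -- good d
        have goodd : d ∈ (X (k - 1)).support ∨ (2 ≤ k ∧ ∃ a'' ∈ (X (k - 2)).support,
            Finsupp.single d 1 = L.bdp (Finsupp.single a'' 1)) := by
          have hsub : k - 1 - 1 = k - 2 := by omega
          rcases IH (k - 1) (by omega) (by omega) (by omega) d hdimd with hl | ⟨a'', ha'', he''⟩
          · exact Or.inl hl
          · rw [hsub] at ha''
            exact Or.inr ⟨hk2, a'', ha'', he''⟩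
        -- d precedes a
        have hamem : a ∈ (L.bdp (Finsupp.single a' 1)).support := by
          rw [← haeq, Finsupp.support_single_ne_zero a one_ne_zero]
          exact Finset.mem_singleton_self a
        have hltda : lt d a := by
          apply ltlf a' 1 one_pos d ?_ a ?_
          · rw [Function.iterate_one]; exact hd
          · rw [Function.iterate_one]; exact hamem
        -- d is in S
        have hdS : d ∈ S := by
          rcases goodd with hl | ⟨-, a'', ha'', he''⟩
          · exact Finset.mem_union_left _ hl
          · apply Finset.mem_union_right
            apply Finset.mem_biUnion.mpr
            refine ⟨a'', ha'', ?_⟩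
            rw [← he'', Finsupp.support_single_ne_zero d one_ne_zero]
            exact Finset.mem_singleton_self d
        -- the measure decreases
        have hlt_card : (S.filter (fun s => lt s d)).card < (S.filter (fun s => lt s a)).card := by
          apply Finset.card_lt_card
          rw [Finset.ssubset_iff_of_subset]
          · exact ⟨d, Finset.mem_filter.mpr ⟨hdS, hltda⟩,
              fun hcon => ltirrefl d (Finset.mem_filter.mp hcon).2⟩
          · intro x hx
            rw [Finset.mem_filter] at hx ⊢
            exact ⟨hx.1, lttrans hx.2 hltda⟩
        exact IHn ((S.filter (fun s => lt s d)).card) (by omega) d le_rfl goodd b'' hdb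
    -- the main argument : use atomicity
    intro b' hb'
    obtain ⟨a, hdlt, hmem⟩ := hL.atomic.2.2 b' (by omega)
    have hbdne : L.bd a b' ≠ 0 := by
      rcases hmem with hm | hp
      · rw [L.mem_bdm_support', L.bdc_single'] at hm; omega
      · rw [L.mem_bdp_support', L.bdc_single'] at hp; omega
    have hdima : L.dim b' + 1 = L.dim a :=
      L.bd_dim a b' (Finsupp.mem_support_iff.mpr hbdne)
    have good : a ∈ (X (k - 1)).support ∨ (2 ≤ k ∧ ∃ a' ∈ (X (k - 2)).support,
        Finsupp.single a 1 = L.bdp (Finsupp.single a' 1)) := by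
      rcases Nat.lt_or_ge k 2 with hk | hk
      · -- k = 1 : a has dimension m, hence a = h
        have hk1' : k = 1 := by omega
        have hdam : L.dim a = m := by omega
        obtain ⟨g0, hg0, hguniq⟩ := hL.atomic.2.1
        have hah : a = h := by rw [hguniq a hdam, hguniq h hh]
        left
        subst hah
        have : k - 1 = 0 := by omega
        rw [this, X0, Finsupp.support_single_ne_zero a one_ne_zero]
        exact Finset.mem_singleton_self a
      · -- k ≥ 2 : apply the induction hypothesis to a
        have hsub : k - 1 - 1 = k - 2 := by omega
        rcases IH (k - 1) (by omega) (by omega) (by omega) a (by omega) with hl | ⟨a', ha', he'⟩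
        · exact Or.inl hl
        · rw [hsub] at ha'
          exact Or.inr ⟨hk, a', ha', he'⟩
    exact step _ a le_rfl good b' hbdne
  -- now derive the two equivalences
  intro b
  have dir1 : L.dim b = q →
      b ∈ (X (m - q)).support ∨ ∃ a ∈ (X (m - q - 1)).support,
        Finsupp.single b 1 = L.bdp (Finsupp.single a 1) := by
    intro hdim
    exact main (m - q) (by omega) (by omega) b (by omega)
  have dir2 : (b ∈ (X (m - q)).support ∨ ∃ a ∈ (X (m - q - 1)).support,
      Finsupp.single b 1 = L.bdp (Finsupp.single a 1)) → L.dim b = q := by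
    rintro (hm | ⟨a, ha, he⟩)
    · have := dimX (m - q) b hm
      omega
    · have hda : L.dim a + (m - q - 1) = m := dimX (m - q - 1) a ha
      have hbmem : b ∈ (L.bdp (Finsupp.single a 1)).support := by
        rw [← he, Finsupp.support_single_ne_zero b one_ne_zero]
        exact Finset.mem_singleton_self b
      rw [L.mem_bdp_support', L.bdc_single'] at hbmem
      have := L.bd_dim a b (Finsupp.mem_support_iff.mpr (by omega))
      omega
  have iff1 : L.dim b = q ↔
      (b ∈ (X (m - q)).support ∨ ∃ a ∈ (X (m - q - 1)).support,
        Finsupp.single b 1 = L.bdp (Finsupp.single a 1)) := ⟨dir1, dir2⟩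
  refine ⟨iff1, iff1.trans ?_⟩
  -- support of gch
  have happ : (L.gch (X (m - q)) (X (m - q - 1))) b =
      X (m - q) b + ∑ a ∈ (X (m - q - 1)).support,
        (X (m - q - 1)) a * (L.bdp (Finsupp.single a 1)) b := by
    simp only [FADC.gch, Finsupp.add_apply, Finsupp.sum_apply, Finsupp.sum,
      Finsupp.finset_sum_apply, Finsupp.smul_apply, smul_eq_mul]
  have hterm_nonneg : ∀ a ∈ (X (m - q - 1)).support,
      0 ≤ (X (m - q - 1)) a * (L.bdp (Finsupp.single a 1)) b := fun a _ =>
    mul_nonneg (nonnegX _ a) (L.bdp_nonneg' _ b)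
  have hsum_nonneg : 0 ≤ ∑ a ∈ (X (m - q - 1)).support,
      (X (m - q - 1)) a * (L.bdp (Finsupp.single a 1)) b :=
    Finset.sum_nonneg hterm_nonneg
  have hdim_pos : ∀ a ∈ (X (m - q - 1)).support, 0 < L.dim a := by
    intro a ha
    have := dimX (m - q - 1) a ha
    omega
  constructor
  · rintro (hm | ⟨a, ha, he⟩)
    · apply Finsupp.mem_support_iff.mpr
      show (L.gch (X (m - q)) (X (m - q - 1))) b ≠ 0
      rw [happ]
      have h1 : 0 < X (m - q) b := lt_of_le_of_ne (nonnegX _ b)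
        (Ne.symm (Finsupp.mem_support_iff.mp hm))
      omega
    · apply Finsupp.mem_support_iff.mpr
      show (L.gch (X (m - q)) (X (m - q - 1))) b ≠ 0
      rw [happ]
      have hbmem : b ∈ (L.bdp (Finsupp.single a 1)).support := by
        rw [← he, Finsupp.support_single_ne_zero b one_ne_zero]
        exact Finset.mem_singleton_self b
      have h1 : 0 < (X (m - q - 1)) a * (L.bdp (Finsupp.single a 1)) b :=
        mul_pos (lt_of_le_of_ne (nonnegX _ a) (Ne.symm (Finsupp.mem_support_iff.mp ha)))
          (lt_of_le_of_ne (L.bdp_nonneg' _ b) (Ne.symm (Finsupp.mem_support_iff.mp hbmem)))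
      have h2 : (X (m - q - 1)) a * (L.bdp (Finsupp.single a 1)) b ≤
          ∑ a' ∈ (X (m - q - 1)).support,
            (X (m - q - 1)) a' * (L.bdp (Finsupp.single a' 1)) b :=
        Finset.single_le_sum hterm_nonneg ha
      have h3 : 0 ≤ X (m - q) b := nonnegX _ b
      omega
  · intro hmem
    have hne : (L.gch (X (m - q)) (X (m - q - 1))) b ≠ 0 := Finsupp.mem_support_iff.mp hmem
    rw [happ] at hne
    by_cases hXb : X (m - q) b = 0
    · have hsum_ne : (∑ a ∈ (X (m - q - 1)).support,
          (X (m - q - 1)) a * (L.bdp (Finsupp.single a 1)) b) ≠ 0 := by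
        intro h0
        apply hne
        rw [hXb, h0, add_zero]
      obtain ⟨a, ha, hterm⟩ := Finset.exists_ne_zero_of_sum_ne_zero hsum_ne
      right
      refine ⟨a, ha, ?_⟩
      apply (bdpS a (hdim_pos a ha) b).mp
      rw [Finsupp.mem_support_iff]
      intro h0
      apply hterm
      rw [h0, mul_zero]
    · exact Or.inl (Finsupp.mem_support_iff.mpr hXb)
end
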